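/- arXiv:2601.12643 — 2 statements merged into one kernel-verified Lean document; each statement's English description precedes it below -/
import Mathlib

section
/- Let K be a field with char(K) ∤ d where d ≥ 2, and let ℓ₀ ≥ 2 be an integer with char(K) ∤ ℓ₀. Then the polynomial f₀(x) = -x^{dℓ₀} + (x^{ℓ₀} + 1)^d ∈ K[x] has degree ℓ₀(d-1) and has no repeated roots (is separable). -/
open Polynomial

-- auxiliary: degree of (X+1)^d - X^d is d-1
lemma aux_natDegree_F (K : Type*) [Field K] (d : ℕ) (hd : 2 ≤ d) (hdK : (d : K) ≠ 0) :
    (((X + 1) ^ d - X ^ d : K[X])).natDegree = d - 1 := by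
  have hle : (((X + 1) ^ d - X ^ d : K[X])).natDegree ≤ d - 1 := by
    rw [natDegree_le_iff_coeff_eq_zero]
    intro N hN
    have hN' : d - 1 < N := hN
    rcases lt_or_ge N d with h | h
    · have : N = d - 1 := by omega
      omega
    · rcases eq_or_lt_of_le h with h | h
      · subst h
        simp [coeff_X_add_one_pow, Nat.choose_self]
      · rw [coeff_sub, coeff_X_add_one_pow, coeff_X_pow,
          Nat.choose_eq_zero_of_lt h, if_neg (by omega : ¬ N = d)]
        simp
  have hcoeff : (((X + 1) ^ d - X ^ d : K[X])).coeff (d - 1) = d := by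
    rw [coeff_sub, coeff_X_add_one_pow, coeff_X_pow, if_neg (by omega : ¬ d - 1 = d),
      sub_zero, Nat.choose_symm (show 1 ≤ d by omega), Nat.choose_one_right]
  have hge : d - 1 ≤ (((X + 1) ^ d - X ^ d : K[X])).natDegree := by
    apply le_natDegree_of_ne_zero
    rw [hcoeff]; exact hdK
  omega

-- auxiliary: no common root of f and its derivative over any field
lemma aux_no_common_root (L : Type*) [Field L] (d ℓ₀ : ℕ) (hd : 2 ≤ d) (hℓ : 2 ≤ ℓ₀)
    (hdL : (d : L) ≠ 0) (hℓL : (ℓ₀ : L) ≠ 0) (x : L)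
    (h1 : (-X ^ (d * ℓ₀) + (X ^ ℓ₀ + 1) ^ d : L[X]).eval x = 0)
    (h2 : (derivative (-X ^ (d * ℓ₀) + (X ^ ℓ₀ + 1) ^ d : L[X])).eval x = 0) : False := by
  have hx : x ≠ 0 := by
    rintro rfl
    simp only [eval_add, eval_neg, eval_pow, eval_one, eval_X,
      zero_pow (show d * ℓ₀ ≠ 0 by positivity), zero_pow (show ℓ₀ ≠ 0 by omega),
      neg_zero, zero_add, one_pow] at h1
    exact one_ne_zero h1
  -- rewrite derivative
  rw [derivative_add, derivative_neg, derivative_X_pow, derivative_pow,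
    derivative_add, derivative_X_pow, derivative_one, add_zero] at h2
  simp only [eval_add, eval_neg, eval_mul, eval_pow, eval_natCast, eval_X, eval_one,
    eval_C] at h1 h2
  -- h1 : -x^(dℓ₀) + (x^ℓ₀+1)^d = 0
  have h1' : (x ^ ℓ₀ + 1) ^ d = x ^ (d * ℓ₀) := by linear_combination h1
  -- h2 : -(dℓ₀ x^(dℓ₀-1)) + d (x^ℓ₀+1)^(d-1) * (ℓ₀ x^(ℓ₀-1)) = 0
  have h2' : (d : L) * (ℓ₀ : L) * x ^ (d * ℓ₀ - 1)
      = (d : L) * (ℓ₀ : L) * ((x ^ ℓ₀ + 1) ^ (d - 1) * x ^ (ℓ₀ - 1)) := by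
    push_cast at h2
    linear_combination -h2
  have hdl : (d : L) * (ℓ₀ : L) ≠ 0 := mul_ne_zero hdL hℓL
  have h3 : x ^ (d * ℓ₀ - 1) = (x ^ ℓ₀ + 1) ^ (d - 1) * x ^ (ℓ₀ - 1) :=
    mul_left_cancel₀ hdl h2'
  have hsplit : d * ℓ₀ - 1 = ℓ₀ * (d - 1) + (ℓ₀ - 1) := by
    have e1 : ℓ₀ * (d - 1) + ℓ₀ = ℓ₀ * d := by
      rw [← Nat.mul_succ]; congr 1; omega
    have e2 : d * ℓ₀ = ℓ₀ * d := Nat.mul_comm d ℓ₀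
    omega
  have h4 : (x ^ ℓ₀) ^ (d - 1) * x ^ (ℓ₀ - 1) = (x ^ ℓ₀ + 1) ^ (d - 1) * x ^ (ℓ₀ - 1) := by
    rw [← h3, hsplit, pow_add, ← pow_mul]
  have h5 : (x ^ ℓ₀) ^ (d - 1) = (x ^ ℓ₀ + 1) ^ (d - 1) :=
    mul_right_cancel₀ (pow_ne_zero _ hx) h4
  set y := x ^ ℓ₀ with hy
  have h6 : (y + 1) ^ d = y ^ d := by
    rw [h1', mul_comm, pow_mul]
  have hd1 : d = (d - 1) + 1 := by omega
  have h7 : (y + 1) ^ (d - 1) * (y + 1) = y ^ (d - 1) * y := by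
    rw [← pow_succ, ← pow_succ, ← hd1]; exact h6
  rw [← h5] at h7
  have h8 : y ^ (d - 1) = 0 := by
    have : y ^ (d - 1) * (y + 1) - y ^ (d - 1) * y = 0 := by rw [h7]; ring
    calc y ^ (d - 1) = y ^ (d - 1) * (y + 1) - y ^ (d - 1) * y := by ring
    _ = 0 := this
  have hy0 : y = 0 := pow_eq_zero_iff (by omega : d - 1 ≠ 0) |>.mp h8
  rw [hy0] at h5
  simp [zero_pow (show d - 1 ≠ 0 by omega)] at h5

theorem stmt_0 (K : Type*) [Field K] (d ℓ₀ : ℕ) (hd : 2 ≤ d) (hℓ : 2 ≤ ℓ₀)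
    (hdK : (d : K) ≠ 0) (hℓK : (ℓ₀ : K) ≠ 0) :
    ((-X ^ (d * ℓ₀) + (X ^ ℓ₀ + 1) ^ d : K[X]).natDegree = ℓ₀ * (d - 1)) ∧
      (-X ^ (d * ℓ₀) + (X ^ ℓ₀ + 1) ^ d : K[X]).Separable := by
  set f : K[X] := -X ^ (d * ℓ₀) + (X ^ ℓ₀ + 1) ^ d with hf
  constructor
  · -- degree
    have hcomp : f = ((X + 1) ^ d - X ^ d : K[X]).comp (X ^ ℓ₀) := by
      simp [hf, sub_comp, pow_comp, add_comp, X_comp, one_comp, ← pow_mul]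
      ring
    rw [hcomp, natDegree_comp, aux_natDegree_F K d hd hdK, natDegree_X_pow, mul_comm]
  · -- separability
    rw [← separable_map (algebraMap K (AlgebraicClosure K))]
    set L := AlgebraicClosure K
    have hmap : f.map (algebraMap K L) = -X ^ (d * ℓ₀) + (X ^ ℓ₀ + 1) ^ d := by
      simp [hf]
    rw [hmap]
    set g : L[X] := -X ^ (d * ℓ₀) + (X ^ ℓ₀ + 1) ^ d with hg
    have hdL : (d : L) ≠ 0 := by
      have : algebraMap K L (d : K) ≠ 0 := (_root_.map_ne_zero _).mpr hdK
      simpa using this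
    have hℓL : (ℓ₀ : L) ≠ 0 := by
      have : algebraMap K L (ℓ₀ : K) ≠ 0 := (_root_.map_ne_zero _).mpr hℓK
      simpa using this
    -- separable = coprime with derivative; use gcd
    rw [Polynomial.Separable]
    classical
    rw [← EuclideanDomain.gcd_isUnit_iff]
    by_contra hu
    have hdeg : (EuclideanDomain.gcd g (derivative g)).degree ≠ 0 := by
      intro h0
      exact hu (isUnit_iff_degree_eq_zero.mpr h0)
    obtain ⟨x, hx⟩ := IsAlgClosed.exists_root _ hdeg
    have hgdvd := EuclideanDomain.gcd_dvd_left g (derivative g)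
    have hgdvd' := EuclideanDomain.gcd_dvd_right g (derivative g)
    have hroot1 : g.eval x = 0 := by
      obtain ⟨c, hc⟩ := hgdvd
      rw [hc, eval_mul, hx.eq_zero, zero_mul]
    have hroot2 : (derivative g).eval x = 0 := by
      obtain ⟨c, hc⟩ := hgdvd'
      rw [hc, eval_mul, hx.eq_zero, zero_mul]
    exact aux_no_common_root L d ℓ₀ hd hℓ hdL hℓL x hroot1 hroot2
end

section
/- Let K be an algebraically closed field of characteristic 0, let d ≥ 2 and ℓ₀ ≥ 2 be integers, and let f₁, f₂, f₃ ∈ K[x] be polynomials of degree ℓ₀ such that f₁^d, f₂^d, f₃^d are linearly independent over K and f₁^d + f₂^d + f₃^d = A for a nonzero constant A ∈ K. Then ℓ₀(d - 6) ≤ -3; in particular d ≤ 5. -/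
open Polynomial

private lemma wronskian_mul_mul {R : Type*} [CommRing R] (g a b : R[X]) :
    wronskian (g * a) (g * b) = g ^ 2 * wronskian a b := by
  simp only [wronskian, derivative_mul]; ring

private lemma pow_dvd_deriv {R : Type*} [CommRing R] (p : R[X]) (d' : ℕ) :
    p ^ (d' + 1) ∣ derivative (p ^ (d' + 2)) := by
  rw [derivative_pow]
  exact ⟨C ((d' + 2 : ℕ) : R) * derivative p, by push_cast; ring⟩

private lemma pow_dvd_deriv2 {R : Type*} [CommRing R] (p : R[X]) (d' : ℕ) :
    p ^ d' ∣ derivative (derivative (p ^ (d' + 2))) := by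
  refine ⟨C ((d' + 2 : ℕ) : R) * (C ((d' + 1 : ℕ) : R) * derivative p * derivative p
      + p * derivative (derivative p)), ?_⟩
  rw [derivative_pow]
  simp only [derivative_mul, derivative_C, derivative_pow]
  push_cast
  ring

private lemma key_dvd {R : Type*} [CommRing R] (d' : ℕ) (p q : R[X]) (a : R) (mp mq : ℕ)
    (hp : (X - C a) ^ mp ∣ p) (hq : (X - C a) ^ mq ∣ q) :
    (X - C a) ^ (d' * (mp + mq)) ∣
      wronskian (derivative (p ^ (d' + 2))) (derivative (q ^ (d' + 2))) := by
  have hp1 : (X - C a) ^ ((d' + 1) * mp) ∣ derivative (p ^ (d' + 2)) :=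
    dvd_trans (by rw [mul_comm, pow_mul]; exact pow_dvd_pow_of_dvd hp _)
      (pow_dvd_deriv p d')
  have hq1 : (X - C a) ^ ((d' + 1) * mq) ∣ derivative (q ^ (d' + 2)) :=
    dvd_trans (by rw [mul_comm, pow_mul]; exact pow_dvd_pow_of_dvd hq _)
      (pow_dvd_deriv q d')
  have hp2 : (X - C a) ^ (d' * mp) ∣ derivative (derivative (p ^ (d' + 2))) :=
    dvd_trans (by rw [mul_comm, pow_mul]; exact pow_dvd_pow_of_dvd hp _)
      (pow_dvd_deriv2 p d')
  have hq2 : (X - C a) ^ (d' * mq) ∣ derivative (derivative (q ^ (d' + 2))) :=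
    dvd_trans (by rw [mul_comm, pow_mul]; exact pow_dvd_pow_of_dvd hq _)
      (pow_dvd_deriv2 q d')
  rw [wronskian]
  apply dvd_sub
  · have hle : d' * (mp + mq) ≤ (d' + 1) * mp + d' * mq := by nlinarith
    exact (pow_dvd_pow _ hle).trans (by rw [pow_add]; exact mul_dvd_mul hp1 hq2)
  · have hle : d' * (mp + mq) ≤ d' * mp + (d' + 1) * mq := by nlinarith
    exact (pow_dvd_pow _ hle).trans (by rw [pow_add]; exact mul_dvd_mul hp2 hq1)

theorem stmt_5 (K : Type*) [Field K] [IsAlgClosed K] [CharZero K]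
    (d ℓ₀ : ℕ) (hd : 2 ≤ d) (hℓ : 2 ≤ ℓ₀)
    (f₁ f₂ f₃ : K[X])
    (h1 : f₁.natDegree = ℓ₀) (h2 : f₂.natDegree = ℓ₀) (h3 : f₃.natDegree = ℓ₀)
    (hli : LinearIndependent K ![f₁ ^ d, f₂ ^ d, f₃ ^ d])
    (A : K) (hA : A ≠ 0) (hsum : f₁ ^ d + f₂ ^ d + f₃ ^ d = C A) :
    (ℓ₀ : ℤ) * ((d : ℤ) - 6) ≤ -3 ∧ d ≤ 5 := by
  classical
  obtain ⟨d', rfl⟩ : ∃ d', d = d' + 2 := ⟨d - 2, by omega⟩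
  -- nonzeroness of the fᵢ
  have hf₁ : f₁ ≠ 0 := fun h => by rw [h, natDegree_zero] at h1; omega
  have hf₂ : f₂ ≠ 0 := fun h => by rw [h, natDegree_zero] at h2; omega
  have hf₃ : f₃ ≠ 0 := fun h => by rw [h, natDegree_zero] at h3; omega
  set D₁ := derivative (f₁ ^ (d' + 2)) with hD₁def
  set D₂ := derivative (f₂ ^ (d' + 2)) with hD₂def
  set D₃ := derivative (f₃ ^ (d' + 2)) with hD₃def
  have hDne : ∀ (f : K[X]), f.natDegree = ℓ₀ → derivative (f ^ (d' + 2)) ≠ 0 := by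
    intro f hf h
    have := natDegree_eq_zero_of_derivative_eq_zero h
    rw [natDegree_pow, hf] at this
    rcases Nat.mul_eq_zero.mp this with h' | h' <;> omega
  have hD₁0 : D₁ ≠ 0 := hDne f₁ h1
  have hD₂0 : D₂ ≠ 0 := hDne f₂ h2
  have hD₃0 : D₃ ≠ 0 := hDne f₃ h3
  have hsum' : D₁ + D₂ + D₃ = 0 := by
    have := congrArg derivative hsum
    simpa using this
  set W := wronskian D₂ D₃ with hWdef
  have hW12 : wronskian D₁ D₂ = W := wronskian_eq_of_sum_zero hsum'
  have hW31 : wronskian D₃ D₁ = W :=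
    (wronskian_eq_of_sum_zero (show D₂ + D₃ + D₁ = 0 by linear_combination hsum')).symm
  -- Step A : W ≠ 0
  have hW0 : W ≠ 0 := by
    intro hW
    set G := gcd D₂ D₃ with hGdef
    have hG : G ≠ 0 := fun h => hD₂0 ((gcd_eq_zero_iff D₂ D₃).mp h).1
    have hdiv2 : G * (D₂ / G) = D₂ := EuclideanDomain.mul_div_cancel' hG (gcd_dvd_left _ _)
    have hdiv3 : G * (D₃ / G) = D₃ := EuclideanDomain.mul_div_cancel' hG (gcd_dvd_right _ _)
    have hco : IsCoprime (D₂ / G) (D₃ / G) := isCoprime_div_gcd_div_gcd hD₃0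
    have hw0 : G ^ 2 * wronskian (D₂ / G) (D₃ / G) = 0 := by
      rw [← wronskian_mul_mul, hdiv2, hdiv3]; exact hW
    have hwab : wronskian (D₂ / G) (D₃ / G) = 0 :=
      (mul_eq_zero.mp hw0).resolve_left (pow_ne_zero 2 hG)
    obtain ⟨hda, hdb⟩ := hco.wronskian_eq_zero_iff.mp hwab
    have ha2 : D₂ / G = C ((D₂ / G).coeff 0) := eq_C_of_derivative_eq_zero hda
    have ha3 : D₃ / G = C ((D₃ / G).coeff 0) := eq_C_of_derivative_eq_zero hdb
    have ha20 : (D₂ / G).coeff 0 ≠ 0 := by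
      intro h
      apply hD₂0
      rw [← hdiv2, ha2, h, map_zero, mul_zero]
    set e := (D₃ / G).coeff 0 * ((D₂ / G).coeff 0)⁻¹ with hedef
    have hDe : D₃ = C e * D₂ := by
      have he : e * (D₂ / G).coeff 0 = (D₃ / G).coeff 0 := by
        rw [hedef, mul_assoc, inv_mul_cancel₀ ha20, mul_one]
      rw [← hdiv2, ← hdiv3, ha2, ha3, ← he, C_mul]
      ring
    have hder0 : derivative (f₃ ^ (d' + 2) - C e * f₂ ^ (d' + 2)) = 0 := by
      rw [derivative_sub, derivative_C_mul, ← hD₂def, ← hD₃def, hDe, sub_self]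
    set c₀ := (f₃ ^ (d' + 2) - C e * f₂ ^ (d' + 2)).coeff 0 with hc₀def
    have hrel : f₃ ^ (d' + 2) - C e * f₂ ^ (d' + 2) = C c₀ := eq_C_of_derivative_eq_zero hder0
    have hv : ∑ i, (![-c₀, -(A * e) - c₀, A - c₀]) i •
        (![f₁ ^ (d' + 2), f₂ ^ (d' + 2), f₃ ^ (d' + 2)]) i = 0 := by
      simp only [Fin.sum_univ_three, Matrix.cons_val_zero, Matrix.cons_val_one,
        Matrix.head_cons, Matrix.cons_val_two, Matrix.tail_cons, smul_eq_C_mul,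
        map_sub, map_neg, map_mul, map_add]
      linear_combination (-(C c₀)) * hsum + C A * hrel
    have h0 := Fintype.linearIndependent_iff.mp hli _ hv 0
    have h22 := Fintype.linearIndependent_iff.mp hli _ hv 2
    simp only [Matrix.cons_val_zero, neg_eq_zero] at h0
    simp only [Matrix.cons_val_two, Matrix.tail_cons, Matrix.head_cons, sub_eq_zero] at h22
    exact hA (h22.trans h0)
  -- Step B : divisibility
  have hprod0 : f₁ * f₂ * f₃ ≠ 0 := mul_ne_zero (mul_ne_zero hf₁ hf₂) hf₃
  have hdvd : (f₁ * f₂ * f₃) ^ d' ∣ W := by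
    apply Splits.dvd_of_roots_le_roots (IsAlgClosed.splits _) (pow_ne_zero _ hprod0)
    rw [Multiset.le_iff_count]
    intro a
    rw [roots_pow, Multiset.count_nsmul, roots_mul (by exact hprod0),
      roots_mul (mul_ne_zero hf₁ hf₂), Multiset.count_add, Multiset.count_add,
      count_roots, count_roots, count_roots, count_roots]
    apply (le_rootMultiplicity_iff hW0).mpr
    set m₁ := rootMultiplicity a f₁ with hm₁def
    set m₂ := rootMultiplicity a f₂ with hm₂def
    set m₃ := rootMultiplicity a f₃ with hm₃def
    by_cases h3r : f₃.IsRoot a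
    · by_cases h1r : f₁.IsRoot a
      · have h2r : ¬f₂.IsRoot a := by
          intro h2r
          have := congrArg (Polynomial.eval a) hsum
          rw [eval_add, eval_add, eval_pow, eval_pow, eval_pow, eval_C,
            h1r.eq_zero, h2r.eq_zero, h3r.eq_zero] at this
          simp at this
          exact hA this.symm
        have hm2 : m₂ = 0 := rootMultiplicity_eq_zero h2r
        have hkey := key_dvd d' f₃ f₁ a m₃ m₁ (pow_rootMultiplicity_dvd f₃ a)
          (pow_rootMultiplicity_dvd f₁ a)
        rw [hW31] at hkey
        have : m₁ + m₂ + m₃ = m₃ + m₁ := by omega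
        rw [this]
        exact hkey
      · have hm1 : m₁ = 0 := rootMultiplicity_eq_zero h1r
        have hkey := key_dvd d' f₂ f₃ a m₂ m₃ (pow_rootMultiplicity_dvd f₂ a)
          (pow_rootMultiplicity_dvd f₃ a)
        have : m₁ + m₂ + m₃ = m₂ + m₃ := by omega
        rw [this]
        exact hkey
    · have hm3 : m₃ = 0 := rootMultiplicity_eq_zero h3r
      have hkey := key_dvd d' f₁ f₂ a m₁ m₂ (pow_rootMultiplicity_dvd f₁ a)
        (pow_rootMultiplicity_dvd f₂ a)
      rw [hW12] at hkey
      have : m₁ + m₂ + m₃ = m₁ + m₂ := by omega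
      rw [this]
      exact hkey
  -- Step C : degree count
  have hdegle : ((f₁ * f₂ * f₃) ^ d').natDegree ≤ W.natDegree := natDegree_le_of_dvd hdvd hW0
  have hprodnd : ((f₁ * f₂ * f₃) ^ d').natDegree = d' * (ℓ₀ + ℓ₀ + ℓ₀) := by
    rw [natDegree_pow, natDegree_mul (mul_ne_zero hf₁ hf₂) hf₃, natDegree_mul hf₁ hf₂,
      h1, h2, h3]
  have hND2 : D₂.natDegree ≤ (d' + 2) * ℓ₀ - 1 := by
    have := natDegree_derivative_le (f₂ ^ (d' + 2))
    rwa [natDegree_pow, h2] at this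
  have hND3 : D₃.natDegree ≤ (d' + 2) * ℓ₀ - 1 := by
    have := natDegree_derivative_le (f₃ ^ (d' + 2))
    rwa [natDegree_pow, h3] at this
  have hw1 : W.natDegree < D₂.natDegree + D₃.natDegree := natDegree_wronskian_lt_add hW0
  have hP1 : 1 ≤ (d' + 2) * ℓ₀ := by
    calc 1 ≤ 2 * 2 := by norm_num
    _ ≤ (d' + 2) * ℓ₀ := Nat.mul_le_mul (by omega) hℓ
  have hchain : d' * (ℓ₀ + ℓ₀ + ℓ₀) < ((d' + 2) * ℓ₀ - 1) + ((d' + 2) * ℓ₀ - 1) :=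
    lt_of_le_of_lt (hprodnd ▸ hdegle) (lt_of_lt_of_le hw1 (add_le_add hND2 hND3))
  zify [hP1] at hchain
  have g1 : (ℓ₀ : ℤ) * (((d' : ℤ) + 2) - 6) ≤ -3 := by nlinarith [hchain]
  constructor
  · push_cast
    linarith [g1]
  · by_contra hcon
    push_neg at hcon
    have hd4 : (4 : ℤ) ≤ (d' : ℤ) := by exact_mod_cast by omega
    have : (0 : ℤ) ≤ (ℓ₀ : ℤ) * (((d' : ℤ) + 2) - 6) := by
      apply mul_nonneg (by positivity)
      linarith
    linarith
end
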